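/- Let Ω be a compact metric space, T a homeomorphism of Ω, and A: Ω → GL(2,ℂ) continuous with |det A(ω)| = 1. If (T,A) admits no Sacker–Sell solution, then (T,A) exhibits uniform exponential growth: there exist C > 0 and λ > 1 such that ‖Aⁿ(ω)‖ ≥ Cλ^{|n|} for all n ∈ ℤ and ω ∈ Ω. -/

import Mathlib

noncomputable section

abbrev E2 := EuclideanSpace ℂ (Fin 2)
abbrev M2 := Matrix (Fin 2) (Fin 2) ℂ

noncomputable def opNorm (M : M2) : ℝ :=
  ‖Matrix.toEuclideanCLM (𝕜 := ℂ) (n := Fin 2) M‖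

noncomputable def mulV (M : M2) (v : E2) : E2 :=
  Matrix.toEuclideanCLM (𝕜 := ℂ) (n := Fin 2) M v

variable {Ω : Type*} [MetricSpace Ω]

noncomputable def fwd (T : Ω ≃ₜ Ω) (A : Ω → M2) : ℕ → Ω → M2
  | 0, _ => 1
  | n + 1, ω => fwd T A n (T ω) * A ω

noncomputable def coc (T : Ω ≃ₜ Ω) (A : Ω → M2) (n : ℤ) (ω : Ω) : M2 :=
  if 0 ≤ n then fwd T A n.toNat ω
  else (fwd T A (-n).toNat ((⇑T.symm)^[(-n).toNat] ω))⁻¹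

/-! ### Basic facts about `opNorm` and `mulV` -/

lemma mulV_mul (M N : M2) (v : E2) : mulV (M * N) v = mulV M (mulV N v) := by
  simp [mulV, map_mul]

lemma mulV_one (v : E2) : mulV 1 v = v := by simp [mulV, map_one]

lemma opNorm_one : opNorm 1 = 1 := by simp [opNorm, map_one]

lemma opNorm_nonneg' (M : M2) : 0 ≤ opNorm M := norm_nonneg _

lemma opNorm_mul_le (M N : M2) : opNorm (M * N) ≤ opNorm M * opNorm N := by
  simp only [opNorm, map_mul]
  exact ContinuousLinearMap.opNorm_comp_le _ _

lemma mulV_le (M : M2) (v : E2) : ‖mulV M v‖ ≤ opNorm M * ‖v‖ :=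
  ContinuousLinearMap.le_opNorm _ _

lemma mulV_smul (M : M2) (c : ℂ) (v : E2) : mulV M (c • v) = c • mulV M v := by
  simp [mulV]

lemma exists_norm_attained (M : M2) : ∃ u : E2, ‖u‖ = 1 ∧ ‖mulV M u‖ = opNorm M := by
  have hS : IsCompact (Metric.sphere (0 : E2) 1) := isCompact_sphere _ _
  have hne : (Metric.sphere (0 : E2) 1).Nonempty :=
    NormedSpace.sphere_nonempty.2 zero_le_one
  have hcont : ContinuousOn (fun v : E2 => ‖mulV M v‖) (Metric.sphere 0 1) :=
    ((Matrix.toEuclideanCLM (𝕜 := ℂ) (n := Fin 2) M).continuous.norm).continuousOn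
  obtain ⟨u, huS, hmax'⟩ := hS.exists_isMaxOn hne hcont
  have hmax : ∀ y ∈ Metric.sphere (0:E2) 1, ‖mulV M y‖ ≤ ‖mulV M u‖ := fun y hy => hmax' hy
  have hu : ‖u‖ = 1 := by simpa using huS
  refine ⟨u, hu, le_antisymm (by simpa [hu] using mulV_le M u) ?_⟩
  refine ContinuousLinearMap.opNorm_le_bound _ (norm_nonneg _) fun x => ?_
  rcases eq_or_ne x 0 with rfl | hx
  · simp
  · have hxn : ‖x‖ ≠ 0 := norm_ne_zero_iff.2 hx
    have hmem : (‖x‖⁻¹ : ℂ) • x ∈ Metric.sphere (0 : E2) 1 := by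
      simp [norm_smul, hxn, abs_of_nonneg (norm_nonneg x)]
    have := hmax _ hmem
    have hsm : ‖mulV M ((‖x‖⁻¹ : ℂ) • x)‖ = ‖x‖⁻¹ * ‖mulV M x‖ := by
      rw [mulV_smul, norm_smul]
      simp
    rw [hsm] at this
    calc ‖mulV M x‖ = ‖x‖ * (‖x‖⁻¹ * ‖mulV M x‖) := by field_simp
    _ ≤ ‖x‖ * ‖mulV M u‖ := by
        apply mul_le_mul_of_nonneg_left this (norm_nonneg x)
    _ = ‖mulV M u‖ * ‖x‖ := mul_comm _ _

lemma mulV_single (M : M2) (i j : Fin 2) :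
    mulV M (EuclideanSpace.single i 1) j = M j i := by
  have h0 : mulV M (EuclideanSpace.single i 1)
      = (WithLp.equiv 2 _).symm (M.mulVec (Pi.single i 1)) := by
    rw [mulV, ← EuclideanSpace.toLp_single]
    exact Matrix.toEuclideanCLM_toLp (𝕜 := ℂ) M _
  rw [h0]
  simp [Matrix.mulVec_single]

lemma norm_col_le (M : M2) (i : Fin 2) :
    Real.sqrt (‖M 0 i‖ ^ 2 + ‖M 1 i‖ ^ 2) ≤ opNorm M := by
  have h1 : ‖mulV M (EuclideanSpace.single i (1:ℂ))‖
      = Real.sqrt (‖M 0 i‖ ^ 2 + ‖M 1 i‖ ^ 2) := by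
    rw [EuclideanSpace.norm_eq]
    congr 1
    rw [Fin.sum_univ_two, mulV_single, mulV_single]
  have h2 := mulV_le M (EuclideanSpace.single i (1:ℂ))
  rw [h1, EuclideanSpace.norm_single] at h2
  simpa using h2

lemma one_le_opNorm_of_det (M : M2) (h : ‖M.det‖ = 1) : 1 ≤ opNorm M := by
  set a := ‖M 0 0‖
  set b := ‖M 0 1‖
  set c := ‖M 1 0‖
  set d := ‖M 1 1‖
  have ha : 0 ≤ a := norm_nonneg _
  have hb : 0 ≤ b := norm_nonneg _
  have hc : 0 ≤ c := norm_nonneg _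
  have hd : 0 ≤ d := norm_nonneg _
  have hdet : (1:ℝ) ≤ a * d + b * c := by
    have : ‖M.det‖ ≤ a * d + b * c := by
      rw [Matrix.det_fin_two]
      calc ‖M 0 0 * M 1 1 - M 0 1 * M 1 0‖
          ≤ ‖M 0 0 * M 1 1‖ + ‖M 0 1 * M 1 0‖ :=
            norm_sub_le _ _
        _ = a * d + b * c := by rw [norm_mul, norm_mul]
    linarith [h ▸ this]
  set s := Real.sqrt (a ^ 2 + c ^ 2) with hs
  set t := Real.sqrt (b ^ 2 + d ^ 2) with ht
  have hs2 : s ^ 2 = a ^ 2 + c ^ 2 := Real.sq_sqrt (by positivity)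
  have ht2 : t ^ 2 = b ^ 2 + d ^ 2 := Real.sq_sqrt (by positivity)
  have hsn : 0 ≤ s := Real.sqrt_nonneg _
  have htn : 0 ≤ t := Real.sqrt_nonneg _
  have hst : a * d + b * c ≤ s * t := by
    have hX2 : (a * d + b * c) ^ 2 ≤ (s * t) ^ 2 := by
      have : (s * t) ^ 2 = (a ^ 2 + c ^ 2) * (b ^ 2 + d ^ 2) := by
        rw [mul_pow, hs2, ht2]
      rw [this]
      nlinarith [sq_nonneg (a * b - c * d)]
    nlinarith [hX2, mul_nonneg hsn htn, sq_nonneg (s * t - (a * d + b * c)),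
      sq_nonneg (s * t + (a * d + b * c))]
  have h1 : s ≤ opNorm M := norm_col_le M 0
  have h2 : t ≤ opNorm M := norm_col_le M 1
  nlinarith [ContinuousLinearMap.opNorm_nonneg (Matrix.toEuclideanCLM (𝕜 := ℂ) (n := Fin 2) M)]

/-! ### Continuity -/

def toCLMₗ : M2 →ₗ[ℂ] (E2 →L[ℂ] E2) where
  toFun := Matrix.toEuclideanCLM (𝕜 := ℂ) (n := Fin 2)
  map_add' := fun x y => map_add _ x y
  map_smul' := fun c x => map_smul (Matrix.toEuclideanCLM (𝕜 := ℂ) (n := Fin 2)) c x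

lemma cont_toCLM : Continuous (fun M : M2 => Matrix.toEuclideanCLM (𝕜 := ℂ) (n := Fin 2) M) :=
  toCLMₗ.continuous_of_finiteDimensional

lemma cont_mulV : Continuous (fun p : M2 × E2 => mulV p.1 p.2) := by
  have h : Continuous fun p : (E2 →L[ℂ] E2) × E2 => p.1 p.2 :=
    isBoundedBilinearMap_apply.continuous
  exact h.comp (cont_toCLM.prodMap continuous_id)

lemma cont_opNorm : Continuous (fun M : M2 => opNorm M) := cont_toCLM.norm

lemma cont_inv_matrix {X : Type*} [TopologicalSpace X] {g : X → M2}
    (hg : Continuous g) (hdet : ∀ x, (g x).det ≠ 0) :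
    Continuous (fun x => (g x)⁻¹) := by
  have : (fun x => (g x)⁻¹) = fun x => ((g x).det)⁻¹ • (g x).adjugate := by
    funext x
    rw [Matrix.inv_def, Ring.inverse_eq_inv']
  rw [this]
  exact (hg.matrix_det.inv₀ hdet).smul hg.matrix_adjugate

/-! ### The translation `tr` and the cocycle identities -/

noncomputable def tr (T : Ω ≃ₜ Ω) (n : ℤ) (ω : Ω) : Ω :=
  if 0 ≤ n then (⇑T)^[n.toNat] ω else (⇑T.symm)^[(-n).toNat] ω

variable (T : Ω ≃ₜ Ω) (A : Ω → M2)

lemma tr_zero (ω : Ω) : tr T 0 ω = ω := by simp [tr]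

lemma tr_succ (n : ℤ) (ω : Ω) : tr T (n + 1) ω = T (tr T n ω) := by
  rcases le_or_gt 0 n with h | h
  · rw [tr, tr, if_pos h, if_pos (by omega)]
    have : (n + 1).toNat = n.toNat + 1 := by omega
    rw [this, Function.iterate_succ_apply']
  · rcases eq_or_lt_of_le (by omega : n + 1 ≤ 0) with h0 | h0
    · have hn : n = -1 := by omega
      subst hn
      simp [tr]
    · rw [tr, tr, if_neg (by omega), if_neg (by omega)]
      have hk : (-n).toNat = (-(n + 1)).toNat + 1 := by omega
      rw [hk, Function.iterate_succ_apply']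
      exact (T.apply_symm_apply _).symm

lemma tr_pred (n : ℤ) (ω : Ω) : tr T (n - 1) ω = T.symm (tr T n ω) := by
  have := tr_succ T (n - 1) ω
  rw [sub_add_cancel] at this
  rw [this, Homeomorph.symm_apply_apply]

lemma tr_add (m n : ℤ) (ω : Ω) : tr T (m + n) ω = tr T m (tr T n ω) := by
  induction m using Int.induction_on with
  | zero => rw [zero_add, tr_zero]
  | succ k ih =>
      have h1 : (k : ℤ) + 1 + n = (k + n) + 1 := by ring
      rw [h1, tr_succ, ih, tr_succ]
  | pred k ih =>
      have h1 : (-(k : ℤ) - 1 + n) = (-k + n) - 1 := by ring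
      rw [h1, tr_pred, ih, tr_pred]

lemma fwd_succ' (k : ℕ) (ω : Ω) :
    fwd T A (k + 1) ω = A ((⇑T)^[k] ω) * fwd T A k ω := by
  induction k generalizing ω with
  | zero => simp [fwd]
  | succ k ih =>
      show fwd T A (k + 1) (T ω) * A ω = _
      rw [ih (T ω)]
      show A ((⇑T)^[k] (T ω)) * fwd T A k (T ω) * A ω
        = A ((⇑T)^[k+1] ω) * fwd T A (k + 1) ω
      rw [← Function.iterate_succ_apply]
      show _ = A ((⇑T)^[k+1] ω) * (fwd T A k (T ω) * A ω)
      rw [mul_assoc]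

lemma coc_ofNat (n : ℤ) (h : 0 ≤ n) (ω : Ω) : coc T A n ω = fwd T A n.toNat ω :=
  if_pos h

lemma coc_zero (ω : Ω) : coc T A 0 ω = 1 := by simp [coc, fwd]

lemma coc_neg (n : ℤ) (h : n ≤ 0) (ω : Ω) :
    coc T A n ω = (fwd T A (-n).toNat ((⇑T.symm)^[(-n).toNat] ω))⁻¹ := by
  rcases eq_or_lt_of_le h with h0 | h0
  · subst h0
    simp [coc, fwd]
  · exact if_neg (by omega)

variable (hdet : ∀ ω, ‖(A ω).det‖ = 1)

section withdet

include hdet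

lemma det_fwd (k : ℕ) (ω : Ω) : ‖(fwd T A k ω).det‖ = 1 := by
  induction k generalizing ω with
  | zero => simp [fwd]
  | succ k ih => rw [fwd, Matrix.det_mul, norm_mul, ih, hdet, one_mul]

lemma det_fwd_ne (k : ℕ) (ω : Ω) : (fwd T A k ω).det ≠ 0 := by
  intro h0
  have := det_fwd T A hdet k ω
  rw [h0] at this
  simp at this

lemma det_coc (n : ℤ) (ω : Ω) : ‖(coc T A n ω).det‖ = 1 := by
  rcases le_or_gt 0 n with h | h
  · rw [coc_ofNat T A n h]; exact det_fwd T A hdet _ _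
  · rw [coc_neg T A n (le_of_lt h), Matrix.det_nonsing_inv]
    have hd := det_fwd T A hdet (-n).toNat ((⇑T.symm)^[(-n).toNat] ω)
    rw [Ring.inverse_eq_inv', norm_inv, hd, inv_one]

lemma one_le_opNorm_coc (n : ℤ) (ω : Ω) : 1 ≤ opNorm (coc T A n ω) :=
  one_le_opNorm_of_det _ (det_coc T A hdet n ω)

lemma cont_coc (hA : Continuous A) (n : ℤ) : Continuous (fun ω => coc T A n ω) := by
  have hf : ∀ k : ℕ, Continuous (fun ω => fwd T A k ω) := by
    intro k
    induction k with
    | zero => exact continuous_const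
    | succ k ih =>
        show Continuous fun ω => fwd T A k (T ω) * A ω
        exact (ih.comp T.continuous).matrix_mul hA
  rcases le_or_gt 0 n with h | h
  · have : (fun ω => coc T A n ω) = fun ω => fwd T A n.toNat ω := by
      funext ω; exact coc_ofNat T A n h ω
    rw [this]; exact hf _
  · have : (fun ω => coc T A n ω)
        = fun ω => (fwd T A (-n).toNat ((⇑T.symm)^[(-n).toNat] ω))⁻¹ := by
      funext ω; exact coc_neg T A n (le_of_lt h) ω
    rw [this]
    exact cont_inv_matrix ((hf _).comp (T.symm.continuous.iterate _))
      (fun ω => det_fwd_ne T A hdet _ _)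

end withdet

variable (hinv : ∀ ω, IsUnit (A ω))

section withinv

include hinv

lemma coc_succ (n : ℤ) (ω : Ω) :
    coc T A (n + 1) ω = A (tr T n ω) * coc T A n ω := by
  rcases le_or_gt 0 n with h | h
  · rw [coc_ofNat T A n h, coc_ofNat T A (n+1) (by omega)]
    have : (n + 1).toNat = n.toNat + 1 := by omega
    rw [this, fwd_succ', tr, if_pos h]
  · have h1 : n + 1 ≤ 0 := by omega
    set k := (-(n + 1)).toNat with hk
    have hkn : (-n).toNat = k + 1 := by omega
    set ω' := (⇑T.symm)^[k + 1] ω with hω'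
    have hTω' : T ω' = (⇑T.symm)^[k] ω := by
      rw [hω', Function.iterate_succ_apply', T.apply_symm_apply]
    have hcn : coc T A n ω = (fwd T A (k + 1) ω')⁻¹ := by
      rw [coc_neg T A n (le_of_lt h), hkn]
    have hfwd : fwd T A (k + 1) ω' = fwd T A k ((⇑T.symm)^[k] ω) * A ω' := by
      show fwd T A k (T ω') * A ω' = _
      rw [hTω']
    have htr : tr T n ω = ω' := by rw [tr, if_neg (by omega), hkn]
    rw [hcn, hfwd, Matrix.mul_inv_rev, htr, coc_neg T A (n+1) h1, ← hk, ← mul_assoc]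
    rw [Matrix.mul_nonsing_inv _ ((Matrix.isUnit_iff_isUnit_det _).1 (hinv ω')), one_mul]

lemma coc_pred (n : ℤ) (ω : Ω) :
    coc T A (n - 1) ω = (A (tr T (n - 1) ω))⁻¹ * coc T A n ω := by
  have h := coc_succ T A hinv (n - 1) ω
  rw [sub_add_cancel] at h
  rw [h, ← mul_assoc,
    Matrix.nonsing_inv_mul _ ((Matrix.isUnit_iff_isUnit_det _).1 (hinv _)), one_mul]

lemma coc_add (m n : ℤ) (ω : Ω) :
    coc T A (m + n) ω = coc T A m (tr T n ω) * coc T A n ω := by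
  induction m using Int.induction_on with
  | zero => rw [zero_add, coc_zero, one_mul]
  | succ k ih =>
      have h1 : (k : ℤ) + 1 + n = (k + n) + 1 := by ring
      rw [h1, coc_succ T A hinv, ih, coc_succ T A hinv, tr_add, ← mul_assoc]
  | pred k ih =>
      have h1 : (-(k : ℤ) - 1 + n) = (-k + n) - 1 := by ring
      rw [h1, coc_pred T A hinv, ih, coc_pred T A hinv, ← tr_add, ← mul_assoc]
      have h3 : (-(k:ℤ) + n) - 1 = (-k - 1) + n := by ring
      rw [h3]

lemma opNorm_coc_le {B : ℝ} (hB1 : 1 ≤ B) (hBA : ∀ ω, opNorm (A ω) ≤ B)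
    (hBAi : ∀ ω, opNorm (A ω)⁻¹ ≤ B) (n : ℤ) (ω : Ω) :
    opNorm (coc T A n ω) ≤ B ^ n.natAbs := by
  induction n using Int.induction_on with
  | zero => rw [coc_zero, opNorm_one]; norm_num
  | succ k ih =>
      have hN : ((k : ℤ) + 1).natAbs = (k : ℤ).natAbs + 1 := by omega
      rw [hN, coc_succ T A hinv, pow_succ]
      calc opNorm (A (tr T k ω) * coc T A k ω)
          ≤ opNorm (A (tr T k ω)) * opNorm (coc T A k ω) := opNorm_mul_le _ _
        _ ≤ B * B ^ (k : ℤ).natAbs :=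
            mul_le_mul (hBA _) ih (opNorm_nonneg' _) (by positivity)
        _ = B ^ ((k : ℤ).natAbs + 1) := by rw [pow_succ]; ring
  | pred k ih =>
      have hc : (-(k:ℤ) - 1) = (-(k:ℤ)) - 1 := by ring
      have hN : (-(k : ℤ) - 1).natAbs = (-(k:ℤ)).natAbs + 1 := by omega
      rw [hN, hc, coc_pred T A hinv, pow_succ]
      calc opNorm ((A (tr T (-(k:ℤ) - 1) ω))⁻¹ * coc T A (-(k:ℤ)) ω)
          ≤ opNorm (A (tr T (-(k:ℤ) - 1) ω))⁻¹ * opNorm (coc T A (-(k:ℤ)) ω) :=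
            opNorm_mul_le _ _
        _ ≤ B * B ^ (-(k:ℤ)).natAbs :=
            mul_le_mul (hBAi _) ih (opNorm_nonneg' _) (by positivity)
        _ = B ^ ((-(k:ℤ)).natAbs + 1) := by rw [pow_succ]; ring

lemma opNorm_coc_lip {B : ℝ} (hB1 : 1 ≤ B) (hBA : ∀ ω, opNorm (A ω) ≤ B)
    (hBAi : ∀ ω, opNorm (A ω)⁻¹ ≤ B) (p q : ℤ) (ω : Ω) :
    opNorm (coc T A p ω) ≤ B ^ (p - q).natAbs * opNorm (coc T A q ω) := by
  have h1 : coc T A p ω = coc T A (p - q) (tr T q ω) * coc T A q ω := by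
    have := coc_add T A hinv (p - q) q ω
    rw [sub_add_cancel] at this
    exact this
  rw [h1]
  calc opNorm (coc T A (p - q) (tr T q ω) * coc T A q ω)
      ≤ opNorm (coc T A (p - q) (tr T q ω)) * opNorm (coc T A q ω) := opNorm_mul_le _ _
    _ ≤ B ^ (p - q).natAbs * opNorm (coc T A q ω) :=
        mul_le_mul_of_nonneg_right (opNorm_coc_le T A hinv hB1 hBA hBAi _ _)
          (opNorm_nonneg' _)

end withinv


lemma scalar_growth (β κ : ℝ) (N : ℕ) (hβ : 0 ≤ β) (hκ : 0 < κ) (hN : 1 ≤ N)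
    (h : ℤ → ℝ)
    (hpos : ∀ n, 0 ≤ h n) (h0 : h 0 = 0)
    (hlip : ∀ p q : ℤ, h p ≤ h q + β * ((p - q).natAbs : ℝ))
    (hgain : ∀ n : ℤ, ∃ m : ℤ, m.natAbs ≤ N ∧ h n + κ ≤ h (n + m)) :
    ∀ n : ℤ, κ / (4 * N) * (n.natAbs : ℝ)
      - κ / (4 * N) * ((4 * β * N ^ 2 + 4 * κ * N + 2 * κ) / κ) ≤ h n := by
  set α := κ / (4 * N) with hα
  set R : ℝ := (4 * β * N ^ 2 + 4 * κ * N + 2 * κ) / κ with hR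
  have hN0 : (0:ℝ) < N := by exact_mod_cast hN
  have hα0 : 0 < α := by positivity
  have hR0 : 0 ≤ R := by positivity
  have core : ∀ n : ℤ, h n < α * (n.natAbs : ℝ) → (n.natAbs : ℝ) < R := by
    intro nstar hsmall
    set L : ℕ := nstar.natAbs with hL
    set a : ℤ := min 0 nstar with haa
    set b : ℤ := max 0 nstar with hbb
    have hab : a ≤ b := min_le_max
    have hba : b - a = (L : ℤ) := by omega
    have hha : h a ≤ α * (L : ℝ) := by
      rcases le_total 0 nstar with hs | hs
      · have : a = 0 := by omega
        rw [this, h0]; positivity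
      · have : a = nstar := by omega
        rw [this]; exact hsmall.le
    have hhb : h b ≤ α * (L : ℝ) := by
      rcases le_total 0 nstar with hs | hs
      · have : b = nstar := by omega
        rw [this]; exact hsmall.le
      · have : b = 0 := by omega
        rw [this, h0]; positivity
    -- Step A
    have hmaxJ : ∀ p ∈ Finset.Icc a b, h p ≤ α * (L:ℝ) + β * (N:ℝ) := by
      obtain ⟨phat, hpJ, hpmax⟩ :=
        (Finset.Icc a b).exists_max_image h ⟨a, by simp [hab]⟩
      have hpJ' : a ≤ phat ∧ phat ≤ b := Finset.mem_Icc.1 hpJ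
      obtain ⟨m, hmN, hg⟩ := hgain phat
      have hout : phat + m ∉ Finset.Icc a b := by
        intro hin
        have := hpmax _ hin
        linarith
      rw [Finset.mem_Icc] at hout
      push_neg at hout
      have hbound : h phat ≤ α * (L:ℝ) + β * (N:ℝ) := by
        rcases lt_or_ge (phat + m) a with hca | hca
        · have hnear : ((phat - a).natAbs : ℕ) ≤ N := by omega
          have hlp := hlip phat a
          have hcast : ((phat - a).natAbs : ℝ) ≤ (N : ℝ) := by exact_mod_cast hnear
          have := mul_le_mul_of_nonneg_left hcast hβ
          linarith
        · have hcb : b < phat + m := hout hca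
          have hnear : ((phat - b).natAbs : ℕ) ≤ N := by omega
          have hlp := hlip phat b
          have hcast : ((phat - b).natAbs : ℝ) ≤ (N : ℝ) := by exact_mod_cast hnear
          have := mul_le_mul_of_nonneg_left hcast hβ
          linarith
      intro p hp
      exact le_trans (hpmax p hp) hbound
    -- Step B
    set r : ℕ := L / 2 with hr
    set q : ℤ := a + (r : ℤ) with hq
    have hqa : q - a = (r : ℤ) := by omega
    have hbq : (r : ℤ) ≤ b - q := by omega
    have ladder : ∀ i : ℕ, ∃ t : ℤ, (t - q).natAbs ≤ i * N ∧ (i : ℝ) * κ ≤ h t := by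
      intro i
      induction i with
      | zero =>
          refine ⟨q, by simp, ?_⟩
          simpa using hpos q
      | succ i ih =>
          obtain ⟨t, htd, hth⟩ := ih
          obtain ⟨m, hmN, hg⟩ := hgain t
          have hmul : (i + 1) * N = i * N + N := by ring
          refine ⟨t + m, by omega, ?_⟩
          push_cast
          nlinarith
    set i : ℕ := r / N with hi
    obtain ⟨t, htd, hth⟩ := ladder i
    have hiN : i * N ≤ r := Nat.div_mul_le_self r N
    have htJ : t ∈ Finset.Icc a b := by
      rw [Finset.mem_Icc]
      omega
    have hup : h t ≤ α * (L:ℝ) + β * (N:ℝ) := hmaxJ t htJ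
    have hrNi : (r : ℝ) < (N : ℝ) * i + N := by
      have h1 : N * i + r % N = r := Nat.div_add_mod r N
      have hmod : r % N < N := Nat.mod_lt _ (by omega)
      have h2 : r < N * i + N := by omega
      calc (r:ℝ) < ((N * i + N : ℕ) : ℝ) := by exact_mod_cast h2
        _ = (N:ℝ) * i + N := by push_cast; ring
    have hLr : (L : ℝ) ≤ 2 * r + 1 := by
      have : L ≤ 2 * r + 1 := by omega
      calc (L:ℝ) ≤ ((2 * r + 1 : ℕ) : ℝ) := by exact_mod_cast this
        _ = 2 * r + 1 := by push_cast; ring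
    have hik : (i : ℝ) * κ ≤ α * L + β * N := le_trans hth hup
    have e1 : (N:ℝ) * (α * (L:ℝ) + β * N) = κ/4 * L + β * N^2 := by
      rw [hα]; field_simp
    have c2 : (N:ℝ) * ((i:ℝ) * κ) ≤ κ/4 * L + β * N^2 :=
      (mul_le_mul_of_nonneg_left hik hN0.le).trans_eq e1
    have c1 : κ * r < (N:ℝ) * ((i:ℝ) * κ) + κ * N := by
      have := mul_lt_mul_of_pos_left hrNi hκ
      nlinarith
    have c3 : κ * L ≤ 2 * (κ * r) + κ := by
      have := mul_le_mul_of_nonneg_left hLr hκ.le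
      nlinarith
    rw [hR, lt_div_iff₀ hκ]
    linarith
  intro n
  rcases lt_or_ge (h n) (α * (n.natAbs : ℝ)) with hc | hc
  · have hcr := core n hc
    have : α * (n.natAbs : ℝ) ≤ α * R := mul_le_mul_of_nonneg_left hcr.le hα0.le
    linarith [hpos n]
  · have : 0 ≤ α * R := mul_nonneg hα0.le hR0
    linarith

theorem no_SackerSell_implies_uniform_growth [CompactSpace Ω]
    (T : Ω ≃ₜ Ω) (A : Ω → M2) (hA : Continuous A)
    (hinv : ∀ ω, IsUnit (A ω)) (hdet : ∀ ω, ‖(A ω).det‖ = 1)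
    (hnoss : ∀ (ω : Ω) (v : E2), ‖v‖ = 1 → ∃ n : ℤ, 1 < ‖mulV (coc T A n ω) v‖) :
    ∃ (C : ℝ) (lam : ℝ), 0 < C ∧ 1 < lam ∧
      ∀ (n : ℤ) (ω : Ω), C * lam ^ n.natAbs ≤ opNorm (coc T A n ω) := by
  classical
  rcases isEmpty_or_nonempty Ω with hE | hNE
  · exact ⟨1, 2, one_pos, one_lt_two, fun n ω => isEmptyElim ω⟩
  obtain ⟨ω₀⟩ := hNE
  have hdet0 : ∀ ω, (A ω).det ≠ 0 := by
    intro ω h0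
    have := hdet ω
    rw [h0] at this
    simp at this
  set f : Ω → ℝ := fun ω => max (opNorm (A ω)) (opNorm (A ω)⁻¹) with hf
  have hfc : Continuous f :=
    (cont_opNorm.comp hA).max (cont_opNorm.comp (cont_inv_matrix hA hdet0))
  obtain ⟨ωm, -, hωm⟩ :=
    (isCompact_univ (X := Ω)).exists_isMaxOn ⟨ω₀, trivial⟩ hfc.continuousOn
  set B : ℝ := max (f ωm) 1 with hB
  have hB1 : (1:ℝ) ≤ B := le_max_right _ _
  have hBA : ∀ ω, opNorm (A ω) ≤ B := fun ω =>
    le_trans (le_trans (le_max_left _ _) (hωm (Set.mem_univ ω))) (le_max_left _ _)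
  have hBAi : ∀ ω, opNorm (A ω)⁻¹ ≤ B := fun ω =>
    le_trans (le_trans (le_max_right _ _) (hωm (Set.mem_univ ω))) (le_max_left _ _)
  -- compactness: uniform window and gain
  set SS : Set (Ω × E2) := Set.univ ×ˢ Metric.sphere (0:E2) 1 with hSS
  have hKcomp : IsCompact SS := isCompact_univ.prod (isCompact_sphere _ _)
  set U : ℤ × ℕ → Set (Ω × E2) :=
    fun q => {p | 1 + 1/((q.2:ℝ)+1) < ‖mulV (coc T A q.1 p.1) p.2‖} with hU
  have hUopen : ∀ q, IsOpen (U q) := by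
    intro q
    have hcont : Continuous fun p : Ω × E2 => ‖mulV (coc T A q.1 p.1) p.2‖ :=
      (cont_mulV.comp ((((cont_coc T A hdet hA q.1)).comp continuous_fst).prodMk
        continuous_snd)).norm
    exact isOpen_lt continuous_const hcont
  have hcover : SS ⊆ ⋃ q, U q := by
    rintro ⟨ω, v⟩ hp
    have hv : ‖v‖ = 1 := by
      have := hp.2
      simpa [mem_sphere_zero_iff_norm] using this
    obtain ⟨n, hn⟩ := hnoss ω v hv
    obtain ⟨k, hk⟩ := exists_nat_one_div_lt (by linarith : (0:ℝ) < ‖mulV (coc T A n ω) v‖ - 1)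
    refine Set.mem_iUnion.2 ⟨(n, k), ?_⟩
    simp only [hU, Set.mem_setOf_eq]
    have : (1:ℝ)/((k:ℝ)+1) < ‖mulV (coc T A n ω) v‖ - 1 := by exact_mod_cast hk
    linarith
  obtain ⟨t, ht⟩ := hKcomp.elim_finite_subcover U hUopen hcover
  set N : ℕ := max (t.sup fun q => q.1.natAbs) 1 with hN
  have hN1 : 1 ≤ N := le_max_right _ _
  set kmax : ℕ := t.sup fun q => q.2 with hkmax
  set δ : ℝ := 1 / ((kmax : ℝ) + 1) with hδ
  have hδ0 : 0 < δ := by positivity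
  have L3 : ∀ (ω : Ω) (v : E2), ‖v‖ = 1 →
      ∃ m : ℤ, m.natAbs ≤ N ∧ 1 + δ ≤ ‖mulV (coc T A m ω) v‖ := by
    intro ω v hv
    have hp : (ω, v) ∈ SS := by
      refine ⟨Set.mem_univ _, ?_⟩
      simpa [mem_sphere_zero_iff_norm] using hv
    have hmem := ht hp
    rw [Set.mem_iUnion₂] at hmem
    obtain ⟨q, hqt, hq⟩ := hmem
    refine ⟨q.1, le_trans (Finset.le_sup (f := fun q => q.1.natAbs) hqt) (le_max_left _ _), ?_⟩
    have hqle : (q.2 : ℝ) ≤ (kmax : ℝ) := by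
      exact_mod_cast Finset.le_sup (f := fun q => q.2) hqt
    have hdd : δ ≤ 1/((q.2:ℝ)+1) := by
      rw [hδ]
      apply one_div_le_one_div_of_le (by positivity)
      linarith
    have hq' : 1 + 1/((q.2:ℝ)+1) < ‖mulV (coc T A q.1 ω) v‖ := hq
    linarith
  -- norm gain
  have L5 : ∀ (n : ℤ) (ω : Ω), ∃ m : ℤ, m.natAbs ≤ N ∧
      (1 + δ) * opNorm (coc T A n ω) ≤ opNorm (coc T A (n + m) ω) := by
    intro n ω
    obtain ⟨u, hu1, hueq⟩ := exists_norm_attained (coc T A n ω)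
    set w : E2 := mulV (coc T A n ω) u with hw
    have hwn : ‖w‖ = opNorm (coc T A n ω) := hueq
    have hw1 : (1:ℝ) ≤ ‖w‖ := hwn ▸ one_le_opNorm_coc T A hdet n ω
    have hw0 : ‖w‖ ≠ 0 := by linarith
    set v' : E2 := (‖w‖⁻¹ : ℂ) • w with hv'
    have hv'1 : ‖v'‖ = 1 := by
      rw [hv', norm_smul]
      simp [hw0]
    obtain ⟨m, hmN, hm⟩ := L3 (tr T n ω) v' hv'1
    refine ⟨m, hmN, ?_⟩
    have key : mulV (coc T A m (tr T n ω)) w = mulV (coc T A (m + n) ω) u := by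
      rw [coc_add T A hinv m n ω, mulV_mul]
    have hsc : ‖mulV (coc T A m (tr T n ω)) v'‖
        = ‖w‖⁻¹ * ‖mulV (coc T A m (tr T n ω)) w‖ := by
      rw [hv', mulV_smul, norm_smul]
      simp
    rw [hsc] at hm
    have hX : (1 + δ) * ‖w‖ ≤ ‖mulV (coc T A (m + n) ω) u‖ := by
      rw [← key]
      have hwpos : (0:ℝ) < ‖w‖ := by linarith
      calc (1 + δ) * ‖w‖ ≤ (‖w‖⁻¹ * ‖mulV (coc T A m (tr T n ω)) w‖) * ‖w‖ :=
            mul_le_mul_of_nonneg_right hm hwpos.le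
        _ = ‖mulV (coc T A m (tr T n ω)) w‖ := by field_simp
    calc (1 + δ) * opNorm (coc T A n ω) = (1 + δ) * ‖w‖ := by rw [hwn]
      _ ≤ ‖mulV (coc T A (n + m) ω) u‖ := by rw [add_comm n m]; exact hX
      _ ≤ opNorm (coc T A (n + m) ω) * ‖u‖ := mulV_le _ _
      _ = opNorm (coc T A (n + m) ω) := by rw [hu1, mul_one]
  -- logarithmic setup
  set β : ℝ := Real.log B with hβ
  set κ : ℝ := Real.log (1 + δ) with hκ
  have hβ0 : 0 ≤ β := Real.log_nonneg hB1
  have hκ0 : 0 < κ := Real.log_pos (by linarith)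
  set α : ℝ := κ / (4 * N) with hαdef
  set γ : ℝ := κ / (4 * N) * ((4 * β * N ^ 2 + 4 * κ * N + 2 * κ) / κ) with hγdef
  have hN0 : (0:ℝ) < N := by exact_mod_cast hN1
  have hα0 : 0 < α := by positivity
  refine ⟨Real.exp (-γ), Real.exp α, Real.exp_pos _, ?_, ?_⟩
  · rw [show (1:ℝ) = Real.exp 0 by rw [Real.exp_zero]]
    exact Real.exp_lt_exp.2 hα0
  intro n ω
  set h : ℤ → ℝ := fun p => Real.log (opNorm (coc T A p ω)) with hh
  have hpos1 : ∀ p : ℤ, 1 ≤ opNorm (coc T A p ω) := fun p => one_le_opNorm_coc T A hdet p ω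
  have hposgt : ∀ p : ℤ, 0 < opNorm (coc T A p ω) := fun p => lt_of_lt_of_le one_pos (hpos1 p)
  have hposn : ∀ p, 0 ≤ h p := fun p => Real.log_nonneg (hpos1 p)
  have h00 : h 0 = 0 := by
    rw [hh]
    simp only [coc_zero, opNorm_one, Real.log_one]
  have hlip : ∀ p q : ℤ, h p ≤ h q + β * ((p - q).natAbs : ℝ) := by
    intro p q
    have hle := opNorm_coc_lip T A hinv hB1 hBA hBAi p q ω
    have hBpow : (0:ℝ) < B ^ (p - q).natAbs := by positivity
    have hlog := Real.log_le_log (hposgt p) hle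
    rw [Real.log_mul (ne_of_gt hBpow) (ne_of_gt (hposgt q)), Real.log_pow] at hlog
    rw [hh]
    calc Real.log (opNorm (coc T A p ω))
        ≤ ((p-q).natAbs : ℕ) * Real.log B + Real.log (opNorm (coc T A q ω)) := hlog
      _ = Real.log (opNorm (coc T A q ω)) + β * ((p - q).natAbs : ℝ) := by
          rw [hβ]; push_cast; ring
  have hgain : ∀ p : ℤ, ∃ m : ℤ, m.natAbs ≤ N ∧ h p + κ ≤ h (p + m) := by
    intro p
    obtain ⟨m, hmN, hm⟩ := L5 p ω
    refine ⟨m, hmN, ?_⟩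
    have hlog := Real.log_le_log (mul_pos (by linarith) (hposgt p)) hm
    rw [Real.log_mul (by positivity) (ne_of_gt (hposgt p))] at hlog
    rw [hh]
    calc Real.log (opNorm (coc T A p ω)) + κ
        = Real.log (1 + δ) + Real.log (opNorm (coc T A p ω)) := by rw [hκ]; ring
      _ ≤ Real.log (opNorm (coc T A (p + m) ω)) := hlog
  have hmain := scalar_growth β κ N hβ0 hκ0 hN1 h hposn h00 hlip hgain n
  have hexp : Real.exp (-γ) * Real.exp α ^ n.natAbs
      = Real.exp (α * (n.natAbs : ℝ) - γ) := by
    rw [← Real.exp_nat_mul, ← Real.exp_add]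
    congr 1
    ring
  rw [hexp]
  have : α * (n.natAbs : ℝ) - γ ≤ h n := by
    rw [hαdef, hγdef] at *
    exact hmain
  calc Real.exp (α * (n.natAbs : ℝ) - γ) ≤ Real.exp (h n) := Real.exp_le_exp.2 this
    _ = opNorm (coc T A n ω) := Real.exp_log (hposgt n)

end
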